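/- Let G be a group, let a, b ∈ G, and let n ≥ 1 be a natural number. Then the element (ab)^{2n} · a^{-2n} · b^{-2n} can be written as a product of n commutators; that is, there exist x₁, …, xₙ, y₁, …, yₙ ∈ G such that (ab)^{2n} a^{-2n} b^{-2n} = [x₁,y₁][x₂,y₂]⋯[xₙ,yₙ]. -/

import Mathlib

open scoped commutatorElement

private lemma conj_prod_comm {G : Type*} [Group G] (g : G) (n : ℕ) (x y : Fin n → G) :
    (List.ofFn fun i => ⁅g * x i * g⁻¹, g * y i * g⁻¹⁆).prod =
      g * (List.ofFn fun i => ⁅x i, y i⁆).prod * g⁻¹ := by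
  calc (List.ofFn fun i => ⁅g * x i * g⁻¹, g * y i * g⁻¹⁆).prod
      = (List.ofFn fun i => (MulAut.conj g).toMonoidHom ⁅x i, y i⁆).prod := by
        have hfun : (fun i => ⁅g * x i * g⁻¹, g * y i * g⁻¹⁆)
            = fun i => (MulAut.conj g).toMonoidHom ⁅x i, y i⁆ := by
          funext i
          rw [map_commutatorElement]
          rfl
        rw [hfun]
    _ = ((List.ofFn fun i => ⁅x i, y i⁆).map (MulAut.conj g).toMonoidHom).prod := by
        rw [List.map_ofFn]; rfl
    _ = g * (List.ofFn fun i => ⁅x i, y i⁆).prod * g⁻¹ := by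
        rw [← map_list_prod]; rfl

private lemma aux_all {G : Type*} [Group G] (a b : G) : ∀ n : ℕ,
    ∃ x y : Fin n → G,
      (a * b) ^ (2 * n) * (a ^ (2 * n))⁻¹ * (b ^ (2 * n))⁻¹ =
        (List.ofFn fun i => ⁅x i, y i⁆).prod := by
  intro n
  induction n with
  | zero => exact ⟨fun i => i.elim0, fun i => i.elim0, by simp⟩
  | succ n ih =>
    obtain ⟨x, y, h⟩ := ih
    set g : G := a * b * a * b with hg
    refine ⟨Fin.snoc (fun i => g * x i * g⁻¹) (a * b * a),
            Fin.snoc (fun i => g * y i * g⁻¹) (b ^ (2 * n + 1) * a⁻¹), ?_⟩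
    rw [List.ofFn_succ']
    simp only [Fin.snoc_castSucc, Fin.snoc_last, List.concat_eq_append,
      List.prod_append, List.prod_cons, List.prod_nil, mul_one]
    rw [conj_prod_comm, ← h]
    have e : (a * b) ^ (2 * (n + 1)) = a * b * a * b * (a * b) ^ (2 * n) := by
      rw [show 2 * (n + 1) = 2 + 2 * n from by ring, pow_add, pow_two]
      simp [mul_assoc]
    rw [e]
    simp only [commutatorElement_def, hg]
    group

/-- For a group `G`, elements `a b : G`, and `n ≥ 1`, the element
`(ab)^(2n) * a^(-2n) * b^(-2n)` is a product of `n` commutators. -/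
theorem prod_pow_two_mul_inv_pow_eq_prod_commutators
    {G : Type*} [Group G] (a b : G) (n : ℕ) (hn : 1 ≤ n) :
    ∃ x y : Fin n → G,
      (a * b) ^ (2 * n) * (a ^ (2 * n))⁻¹ * (b ^ (2 * n))⁻¹ =
        (List.ofFn fun i => ⁅x i, y i⁆).prod := by
  exact aux_all a b n
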